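/- For all α ∈ (0, 1/8], the inequality (2 − α − sin(πα)/2)² / (2(2-α)(4 − 2α − sin(πα)/2)) > cos²(π/(3-α)) holds. -/

import Mathlib

open Real

private lemma aux_sup (a x s : ℝ) (h0 : 0 < a) (h1 : a ≤ 1/8)
    (hx : x ≤ 3.1416*a) (hx3 : (3.1415*a)^3 ≤ x^3) (hx4 : x^4 ≤ (3.1416*a)^4)
    (hs : s ≤ x - x^3/6 + x^4*(5/96)) :
    s ≤ 3.1416*a - 4.533*a^3 := by
  nlinarith [pow_pos h0 3, pow_pos h0 4]

private lemma aux_slo (a x s : ℝ) (h0 : 0 < a) (h1 : a ≤ 1/8)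
    (hx : 3.1415*a ≤ x) (hx3 : x^3 ≤ (3.1416*a)^3)
    (hs : x - x^3/4 ≤ s) :
    3.1415*a - 7.7517*a^3 ≤ s := by
  nlinarith [pow_pos h0 3]

private lemma aux_U (t tl r ct st : ℝ) (ht0 : 0 < t) (htu : t ≤ 0.04546)
    (htl0 : 0 < tl) (htl : tl ≤ t)
    (hct : ct ≤ 1 - t^2/2 + t^4*(5/96)) (hst : t - t^3/4 ≤ st) (hst0 : 0 ≤ st)
    (hrl : 1.7320508 ≤ r) (hru : r ≤ 1.7320509) :
    ct/2 - r/2*st ≤ 1/2 - 0.866025*tl - 0.24*tl^2 := by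
  have h2' : 1.7320508/2 * (t - t^3/4) ≤ r/2*st := by
    nlinarith [mul_nonneg (sub_nonneg.2 hrl) hst0, sq_nonneg t, mul_pos (mul_pos ht0 ht0) ht0]
  have htsq : tl^2 ≤ t^2 := by nlinarith
  have ht3 : t^3 ≤ 0.04546 * t^2 := by nlinarith [sq_nonneg t]
  have ht4 : t^4 ≤ 0.04546^2 * t^2 := by nlinarith [sq_nonneg t, sq_nonneg (t^2)]
  nlinarith [sq_nonneg t]

private lemma aux_key (a : ℝ) (h0 : 0 < a) (h1 : a ≤ 1/8) :
    ((1:ℝ)/2 - 0.866025*(0.116351*(a*(3+a))) - 0.24*(0.116351*(a*(3+a)))^2)^2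
      * (2*(2-a)*(4 - 2*a - (3.1415*a - 7.7517*a^3)/2))
      < (2 - a - (3.1416*a - 4.533*a^3)/2)^2 := by
  nlinarith [mul_nonneg h0.le (sq_nonneg (a - 0.1287)),
    mul_nonneg (mul_nonneg (mul_nonneg h0.le h0.le) h0.le) (sub_nonneg.2 h1),
    mul_nonneg (mul_nonneg (mul_nonneg (mul_nonneg h0.le h0.le) h0.le) h0.le) (sub_nonneg.2 h1),
    pow_nonneg h0.le 5, pow_nonneg h0.le 7, pow_nonneg h0.le 9, pow_nonneg h0.le 11,
    pow_nonneg h0.le 6, pow_nonneg h0.le 8, pow_nonneg h0.le 10, pow_nonneg h0.le 12]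


private lemma aux_r3l : 1.7320508 ≤ Real.sqrt 3 := by
  nlinarith [Real.sqrt_nonneg 3, Real.sq_sqrt (by norm_num : (3:ℝ) ≥ 0)]

private lemma aux_r3u : Real.sqrt 3 ≤ 1.7320509 := by
  nlinarith [Real.sqrt_nonneg 3, Real.sq_sqrt (by norm_num : (3:ℝ) ≥ 0)]

private lemma aux_U0 (tl : ℝ) (h0 : 0 < tl) (h1 : tl ≤ 0.04546) :
    (0:ℝ) ≤ 1/2 - 0.866025*tl - 0.24*tl^2 := by nlinarith

private lemma aux_den (a s : ℝ) (h0 : 0 < a) (h1 : a ≤ 1/8) (hs : s ≤ 1) :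
    0 < 2*(2-a)*(4 - 2*a - s/2) := by nlinarith

private lemma aux_mono (a s l : ℝ) (h0 : 0 < a) (h1 : a ≤ 1/8) (hl : l ≤ s) :
    2*(2-a)*(4 - 2*a - s/2) ≤ 2*(2-a)*(4 - 2*a - l/2) := by nlinarith

private lemma aux_pos (a : ℝ) (h0 : 0 < a) (h1 : a ≤ 1/8) :
    (0:ℝ) ≤ 2 - a - (3.1416*a - 4.533*a^3)/2 := by nlinarith [pow_pos h0 3]

set_option maxHeartbeats 1000000 in
theorem stmt_11 (α : ℝ) (h0 : 0 < α) (h1 : α ≤ 1/8) :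
    (2 - α - sin (π*α)/2)^2 / (2*(2-α)*(4 - 2*α - sin (π*α)/2))
      > (cos (π/(3-α)))^2 := by
  have hπl : 3.1415 < π := by have := Real.pi_gt_d6; norm_num at this ⊢; linarith
  have hπu : π < 3.1416 := by have := Real.pi_lt_d6; norm_num at this ⊢; linarith
  have hx0 : 0 < π*α := by positivity
  have hx1 : π*α ≤ 0.3927 := by nlinarith
  -- sin bounds
  have hsb := Real.sin_bound (x := π*α) (by rw [abs_of_pos hx0]; linarith)
  rw [abs_of_pos hx0, abs_le] at hsb
  have hsla : π*α - (π*α)^3/4 < sin (π*α) := by have := Real.sin_gt_sub_cube hx0; nlinarith [pow_pos hx0 3]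
  have hp3l : (3.1415*α)^3 ≤ (π*α)^3 :=
    pow_le_pow_left₀ (by positivity) (by nlinarith) 3
  have hp3u : (π*α)^3 ≤ (3.1416*α)^3 :=
    pow_le_pow_left₀ (by positivity) (by nlinarith) 3
  have hp4u : (π*α)^4 ≤ (3.1416*α)^4 :=
    pow_le_pow_left₀ (by positivity) (by nlinarith) 4
  have hs_up : sin (π*α) ≤ 3.1416*α - 4.533*α^3 :=
    aux_sup α (π*α) _ h0 h1 (mul_le_mul_of_nonneg_right hπu.le h0.le) hp3l hp4u (by nlinarith [hsb.2, pow_pos hx0 4, mul_le_mul_of_nonneg_left hx1 (pow_pos hx0 4).le])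
  have hs_lo : 3.1415*α - 7.7517*α^3 ≤ sin (π*α) :=
    aux_slo α (π*α) _ h0 h1 (mul_le_mul_of_nonneg_right hπl.le h0.le) hp3u hsla.le
  -- cosine side
  have h3a : (0:ℝ) < 3 - α := by linarith
  set t : ℝ := π*(α*(3+α))/27 with ht
  have hu0 : 0 < α*(3+α) := mul_pos h0 (by linarith)
  have hu1 : α*(3+α) ≤ 0.390625 := by
    nlinarith [mul_le_mul h1 (by linarith : 3+α ≤ 3.125) (by positivity) (by norm_num : (0:ℝ) ≤ 1/8)]
  have ht0 : 0 < t := by positivity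
  have htu : t ≤ 0.04546 := by
    rw [ht]
    nlinarith [mul_le_mul hπu.le hu1 hu0.le (by positivity : (0:ℝ) ≤ 3.1416)]
  have htl : 0.116351*(α*(3+α)) ≤ t := by
    rw [ht]
    nlinarith [mul_le_mul_of_nonneg_right hπl.le hu0.le]
  have hmono : cos (π/(3-α)) ≤ cos (π/3 + t) := by
    apply Real.cos_le_cos_of_nonneg_of_le_pi
    · positivity
    · calc π/(3-α) ≤ π/1 :=
            div_le_div_of_nonneg_left pi_pos.le (by linarith) (by linarith)
          _ ≤ π := by norm_num
    · rw [ht, div_add_div _ _ (by norm_num) (by norm_num : (27:ℝ) ≠ 0),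
         div_le_div_iff₀ (by norm_num) h3a]
      nlinarith [pow_pos h0 3, mul_pos (mul_pos (pow_pos h0 3) pi_pos) h3a]
  -- Taylor bounds at t
  have hcb := Real.cos_bound (x := t) (by rw [abs_of_pos ht0]; linarith)
  rw [abs_of_pos ht0, abs_le] at hcb
  have hstl : t - t^3/4 < sin t := by have := Real.sin_gt_sub_cube ht0; nlinarith [pow_pos ht0 3]
  have hsint0 : 0 ≤ sin t :=
    Real.sin_nonneg_of_nonneg_of_le_pi ht0.le (by linarith)
  have hexp : cos (π/3 + t) = cos t / 2 - Real.sqrt 3 / 2 * sin t := by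
    rw [Real.cos_add, Real.cos_pi_div_three, Real.sin_pi_div_three]; ring
  set tl : ℝ := 0.116351*(α*(3+α)) with htldef
  have htl0 : 0 < tl := by rw [htldef]; positivity
  have hU : cos (π/(3-α)) ≤ 1/2 - 0.866025*tl - 0.24*tl^2 := by
    refine hmono.trans ?_
    rw [hexp]
    exact aux_U t tl (Real.sqrt 3) (cos t) (sin t) ht0 htu htl0 htl (by linarith [hcb.2]) hstl.le
      hsint0 aux_r3l aux_r3u
  have hU0 : (0:ℝ) ≤ 1/2 - 0.866025*tl - 0.24*tl^2 :=
    aux_U0 tl htl0 (by rw [htldef]; nlinarith [mul_le_mul h1 (by linarith : 3+α ≤ 3.125) (by positivity) (by norm_num : (0:ℝ) ≤ 1/8)])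
  have hcos0 : 0 ≤ cos (π/(3-α)) := by
    apply Real.cos_nonneg_of_mem_Icc
    constructor
    · have hnn : 0 ≤ π/(3-α) := by positivity
      linarith [pi_pos]
    · rw [div_le_div_iff₀ h3a (by norm_num : (0:ℝ) < 2)]
      linarith
  have hcsq : (cos (π/(3-α)))^2 ≤ (1/2 - 0.866025*tl - 0.24*tl^2)^2 :=
    pow_le_pow_left₀ hcos0 hU 2
  have hden : 0 < 2*(2-α)*(4 - 2*α - sin (π*α)/2) :=
    aux_den α _ h0 h1 (Real.sin_le_one (π*α))
  rw [gt_iff_lt, lt_div_iff₀ hden]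
  have hkey := aux_key α h0 h1
  rw [← htldef] at hkey
  have hstep1 : (cos (π/(3-α)))^2 * (2*(2-α)*(4 - 2*α - sin (π*α)/2))
      ≤ ((1:ℝ)/2 - 0.866025*tl - 0.24*tl^2)^2
        * (2*(2-α)*(4 - 2*α - (3.1415*α - 7.7517*α^3)/2)) := by
    exact mul_le_mul hcsq (aux_mono α _ _ h0 h1 hs_lo) hden.le (by positivity)
  have hstep2 : (2 - α - (3.1416*α - 4.533*α^3)/2)^2 ≤ (2 - α - sin (π*α)/2)^2 := by
    exact pow_le_pow_left₀ (aux_pos α h0 h1) (by linarith) 2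
  linarith
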